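/- Let R be a commutative ring, M = R^n, and N a submodule of M. Then the auxiliary radical α(N) := {f ∈ M : f ⊗ f + Σᵢ sᵢ ⊗ sᵢ ∈ M ⊗ N + N ⊗ M for some finitely many sᵢ ∈ M} is a submodule of M containing N. -/

import Mathlib

open TensorProduct

/-- The submodule `M ⊗ N + N ⊗ M` of `M ⊗[R] M` (for `M = R^n`), where `N` is
given by a subset `S` of `M`: it is spanned by pure tensors with one factor in `S`. -/
def tensMN {R : Type*} [CommRing R] {n : ℕ} (S : Set (Fin n → R)) :
    Submodule R ((Fin n → R) ⊗[R] (Fin n → R)) :=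
  Submodule.span R
    ({x | ∃ a : Fin n → R, ∃ b ∈ S, x = a ⊗ₜ[R] b} ∪
     {x | ∃ b ∈ S, ∃ a : Fin n → R, x = b ⊗ₜ[R] a})

/-- A submodule `N` of `M = R^n` is *real* if `∑ mᵢ ⊗ mᵢ ∈ M ⊗ N + N ⊗ M` implies
all `mᵢ ∈ N`. -/
def IsRealSubmodule {R : Type*} [CommRing R] {n : ℕ} (N : Submodule R (Fin n → R)) : Prop :=
  ∀ (K : ℕ) (m : Fin K → (Fin n → R)),
    (∑ i, m i ⊗ₜ[R] m i) ∈ tensMN (N : Set (Fin n → R)) → ∀ i, m i ∈ N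

/-- The real radical of a submodule of `R^n`: the smallest real submodule containing it. -/
noncomputable def realRadicalSub {R : Type*} [CommRing R] {n : ℕ}
    (N : Submodule R (Fin n → R)) : Submodule R (Fin n → R) :=
  sInf {P | IsRealSubmodule P ∧ N ≤ P}

/-- The auxiliary radical `α(S)` of a subset of `R^n`. -/
def auxRad {R : Type*} [CommRing R] {n : ℕ} (S : Set (Fin n → R)) : Set (Fin n → R) :=
  {f | ∃ (L : ℕ) (s : Fin L → (Fin n → R)),
    f ⊗ₜ[R] f + ∑ i, s i ⊗ₜ[R] s i ∈ tensMN S}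

/-- The additive submonoid of sums of squares in `M ⊗ M`. -/
noncomputable def sqMonoid (R : Type*) [CommRing R] (n : ℕ) :
    AddSubmonoid ((Fin n → R) ⊗[R] (Fin n → R)) :=
  AddSubmonoid.closure {x | ∃ m : Fin n → R, x = m ⊗ₜ[R] m}

lemma mem_auxRad_iff {R : Type*} [CommRing R] {n : ℕ} {S : Set (Fin n → R)} {f : Fin n → R} :
    f ∈ auxRad S ↔ ∃ q ∈ sqMonoid R n, f ⊗ₜ[R] f + q ∈ tensMN S := by
  constructor
  · rintro ⟨L, s, h⟩
    exact ⟨∑ i, s i ⊗ₜ[R] s i,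
      sum_mem fun i _ => AddSubmonoid.subset_closure ⟨s i, rfl⟩, h⟩
  · rintro ⟨q, hq, h⟩
    obtain ⟨l, hl, hsum⟩ := AddSubmonoid.exists_list_of_mem_closure hq
    refine ⟨l.length, fun i => Classical.choose (hl l[i.1] (List.getElem_mem _)), ?_⟩
    have : ∑ i : Fin l.length,
        (Classical.choose (hl l[i.1] (List.getElem_mem _))) ⊗ₜ[R]
          (Classical.choose (hl l[i.1] (List.getElem_mem _))) = q := by
      rw [← hsum, ← Fin.sum_univ_getElem]
      exact Finset.sum_congr rfl fun i _ =>
        (Classical.choose_spec (hl l[i.1] (List.getElem_mem _))).symm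
    rwa [this]

lemma sqMonoid_smul_sq {R : Type*} [CommRing R] {n : ℕ} {r : R}
    {q : (Fin n → R) ⊗[R] (Fin n → R)} (hq : q ∈ sqMonoid R n) :
    (r * r) • q ∈ sqMonoid R n := by
  induction hq using AddSubmonoid.closure_induction with
  | mem x hx =>
    obtain ⟨m, rfl⟩ := hx
    exact AddSubmonoid.subset_closure
      ⟨r • m, by rw [← smul_tmul', tmul_smul, smul_smul]⟩
  | zero => simpa using (sqMonoid R n).zero_mem
  | add x y _ _ hx hy => simpa [smul_add] using (sqMonoid R n).add_mem hx hy

theorem stmt2 {R : Type*} [CommRing R] {n : ℕ} (N : Submodule R (Fin n → R)) :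
    ∃ P : Submodule R (Fin n → R),
      (P : Set (Fin n → R)) = auxRad (N : Set (Fin n → R)) ∧ N ≤ P := by
  refine ⟨{ carrier := auxRad (N : Set (Fin n → R))
            add_mem' := ?_
            zero_mem' := ?_
            smul_mem' := ?_ }, rfl, ?_⟩
  case refine_2 =>
    refine ⟨0, Fin.elim0, ?_⟩
    simp only [Finset.univ_eq_empty, Finset.sum_empty, add_zero, TensorProduct.zero_tmul]
    exact (tensMN (N : Set (Fin n → R))).zero_mem
  case refine_1 =>
    intro f g hf hg
    rw [mem_auxRad_iff] at hf hg ⊢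
    obtain ⟨qf, hqf, hf⟩ := hf
    obtain ⟨qg, hqg, hg⟩ := hg
    refine ⟨(f - g) ⊗ₜ[R] (f - g) + (2 • qf + 2 • qg),
      add_mem (AddSubmonoid.subset_closure ⟨f - g, rfl⟩)
        (add_mem (nsmul_mem hqf 2) (nsmul_mem hqg 2)), ?_⟩
    have key : (f + g) ⊗ₜ[R] (f + g) + ((f - g) ⊗ₜ[R] (f - g) + (2 • qf + 2 • qg)) =
        2 • (f ⊗ₜ[R] f + qf) + 2 • (g ⊗ₜ[R] g + qg) := by
      simp only [add_tmul, tmul_add, sub_tmul, tmul_sub, two_smul, smul_add]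
      abel
    rw [key]
    exact add_mem (nsmul_mem hf 2) (nsmul_mem hg 2)
  case refine_3 =>
    intro r f hf
    rw [mem_auxRad_iff] at hf ⊢
    obtain ⟨q, hq, h⟩ := hf
    refine ⟨(r * r) • q, sqMonoid_smul_sq hq, ?_⟩
    have key : (r • f) ⊗ₜ[R] (r • f) + (r * r) • q = (r * r) • (f ⊗ₜ[R] f + q) := by
      rw [smul_add, ← smul_tmul', tmul_smul, smul_smul]
    rw [key]
    exact Submodule.smul_mem _ _ h
  case refine_4 =>
    intro f hf
    refine ⟨0, Fin.elim0, ?_⟩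
    simp only [Finset.univ_eq_empty, Finset.sum_empty, add_zero]
    exact Submodule.subset_span (Or.inl ⟨f, f, hf, rfl⟩)
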